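/- With u₀(y) = α e^{−α y} 𝟙_{(0,∞)}(y), the explicit solution u(t,x) = (2π)^{−1/2}(α − t) e^{−(α−t)x} e^{−αt²+α²t} Erf(−(x+t²−2αt)/√(2t)) satisfies sup_{x∈ℝ} |u(t,x)| → 0 as t → α⁻. -/

import Mathlib

open Real MeasureTheory Set Filter

lemma erf_integrable (θ : ℝ) : IntegrableOn (fun z : ℝ => Real.exp (-z ^ 2 / 2)) (Set.Ioi θ) := by
  have : (fun z : ℝ => Real.exp (-z ^ 2 / 2)) = fun z => Real.exp (-(1/2 : ℝ) * z ^ 2) := by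
    ext z; ring_nf
  rw [this]
  exact (integrable_exp_neg_mul_sq (by norm_num)).integrableOn

lemma erf_nonneg (θ : ℝ) : 0 ≤ ∫ z in Set.Ioi θ, Real.exp (-z ^ 2 / 2) :=
  setIntegral_nonneg measurableSet_Ioi fun z _ => (Real.exp_pos _).le

lemma erf_le (θ : ℝ) : (∫ z in Set.Ioi θ, Real.exp (-z ^ 2 / 2)) ≤ Real.sqrt (2 * Real.pi) := by
  have h1 : (fun z : ℝ => Real.exp (-z ^ 2 / 2)) = fun z => Real.exp (-(1/2 : ℝ) * z ^ 2) := by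
    ext z; ring_nf
  have h2 : (∫ z in Set.Ioi θ, Real.exp (-z ^ 2 / 2)) ≤ ∫ z : ℝ, Real.exp (-(1/2 : ℝ) * z ^ 2) := by
    rw [h1]
    exact setIntegral_le_integral (integrable_exp_neg_mul_sq (by norm_num))
      (Filter.Eventually.of_forall fun z => (Real.exp_pos _).le)
  rw [integral_gaussian] at h2
  convert h2 using 2
  rw [eq_div_iff (by norm_num)]; ring

lemma erf_decay {θ : ℝ} (hθ : 0 < θ) :
    (∫ z in Set.Ioi θ, Real.exp (-z ^ 2 / 2)) ≤ 2 / θ * Real.exp (-θ ^ 2 / 2) := by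
  have hmono : (∫ z in Set.Ioi θ, Real.exp (-z ^ 2 / 2))
      ≤ ∫ z in Set.Ioi θ, Real.exp (-(θ/2) * z) := by
    apply setIntegral_mono_on (erf_integrable θ)
      (exp_neg_integrableOn_Ioi θ (by positivity)) measurableSet_Ioi
    intro z hz
    rw [Set.mem_Ioi] at hz
    apply Real.exp_le_exp.2
    nlinarith
  have hcalc : (∫ z in Set.Ioi θ, Real.exp (-(θ/2) * z)) = 2 / θ * Real.exp (-θ ^ 2 / 2) := by
    have : ∀ z : ℝ, Real.exp (-(θ/2) * z) = (fun y => Real.exp (-y)) ((θ/2) * z) := by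
      intro z; simp
    simp_rw [this]
    rw [integral_comp_mul_left_Ioi (fun y => Real.exp (-y)) θ (by positivity),
      smul_eq_mul, integral_exp_neg_Ioi]
    rw [show -(θ/2 * θ) = -θ ^ 2 / 2 by ring, show (θ/2 : ℝ)⁻¹ = 2/θ by field_simp]
  linarith

noncomputable def extK (α : ℝ) : ℝ :=
  Real.exp (α ^ 3 + 1) +
    (Real.sqrt (2 * Real.pi))⁻¹ * (2 * Real.sqrt (2 * α)) * α *
      (Real.exp (α ^ 3) * Real.exp (α ^ 3))

set_option maxHeartbeats 1000000 in
lemma ext_pointwise (α t x : ℝ) (hα : 0 < α) (ht : t ∈ Set.Ioo 0 α) :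
    |(Real.sqrt (2 * Real.pi))⁻¹ * (α - t) * Real.exp (-(α - t) * x) *
        Real.exp (-α * t ^ 2 + α ^ 2 * t) *
        ∫ z in Set.Ioi (-(x + t ^ 2 - 2 * α * t) / Real.sqrt (2 * t)),
          Real.exp (-z ^ 2 / 2)| ≤ extK α * (α - t) := by
  obtain ⟨ht0, htα⟩ := ht
  set b : ℝ := α - t with hb_def
  have hb : 0 < b := sub_pos.2 htα
  have hbα : b ≤ α := by rw [hb_def]; linarith
  have htαle : t ≤ α := htα.le
  set θ : ℝ := -(x + t ^ 2 - 2 * α * t) / Real.sqrt (2 * t) with hθ_def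
  have hI0 : 0 ≤ ∫ z in Set.Ioi θ, Real.exp (-z ^ 2 / 2) := erf_nonneg θ
  have hsqrtπ : (0:ℝ) < Real.sqrt (2 * Real.pi) := Real.sqrt_pos.2 (by positivity)
  have hE : Real.exp (-α * t ^ 2 + α ^ 2 * t) ≤ Real.exp (α ^ 3) := by
    apply Real.exp_le_exp.2; nlinarith
  rw [abs_of_nonneg (mul_nonneg (by positivity) hI0)]
  rcases le_or_gt (-(1/b)) x with hx | hx
  · -- x ≥ -1/b
    have h1 : (Real.sqrt (2 * Real.pi))⁻¹ * b * Real.exp (-b * x) *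
        Real.exp (-α * t ^ 2 + α ^ 2 * t) * (∫ z in Set.Ioi θ, Real.exp (-z ^ 2 / 2))
        ≤ (Real.sqrt (2 * Real.pi))⁻¹ * b * Real.exp 1 * Real.exp (α ^ 3) *
          Real.sqrt (2 * Real.pi) := by
      gcongr
      · have hx' : -x ≤ 1 / b := by
          have := neg_le_neg hx; rwa [neg_neg] at this
        have h := mul_le_mul_of_nonneg_left hx' hb.le
        rw [mul_one_div_cancel hb.ne'] at h
        nlinarith
      · exact erf_le θ
    have h2 : (Real.sqrt (2 * Real.pi))⁻¹ * b * Real.exp 1 * Real.exp (α ^ 3) *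
        Real.sqrt (2 * Real.pi) = Real.exp (α ^ 3 + 1) * b := by
      rw [Real.exp_add]
      field_simp
    have h3 : 0 ≤ (Real.sqrt (2 * Real.pi))⁻¹ * (2 * Real.sqrt (2 * α)) * α *
        (Real.exp (α ^ 3) * Real.exp (α ^ 3)) * b := by positivity
    have h4 : extK α * b = Real.exp (α ^ 3 + 1) * b +
        (Real.sqrt (2 * Real.pi))⁻¹ * (2 * Real.sqrt (2 * α)) * α *
          (Real.exp (α ^ 3) * Real.exp (α ^ 3)) * b := by
      unfold extK; ring
    linarith
  · -- x < -1/b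
    set S : ℝ := Real.sqrt (2 * t) with hS_def
    have hS : 0 < S := Real.sqrt_pos.2 (by positivity)
    have hS2 : S ^ 2 = 2 * t := Real.sq_sqrt (by positivity)
    have hSα : S ≤ Real.sqrt (2 * α) := Real.sqrt_le_sqrt (by linarith)
    set s : ℝ := t * (2 * α - t) with hs_def
    have hs : 0 ≤ s := by apply mul_nonneg ht0.le; linarith
    have hy : 1 / b < -x := by
      have := neg_lt_neg hx; rwa [neg_neg] at this
    have hy0 : 0 < -x := lt_trans (by positivity) hy
    have hθ_eq : θ = (-x + s) / S := by
      rw [hθ_def, hs_def]; ring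
    have hθpos : 0 < θ := by rw [hθ_eq]; positivity
    have hθsq : θ ^ 2 = (-x + s) ^ 2 / (2 * t) := by
      rw [hθ_eq, div_pow, hS2]
    have hSθ : S * θ = -x + s := by
      rw [hθ_eq, mul_div_cancel₀ _ hS.ne']
    clear_value b θ S s
    have h4t : (0:ℝ) < 4 * t := by linarith
    -- exponent bound : -b*x - θ^2/2 ≤ α^3
    have hbb : b * b ≤ α * α := mul_le_mul hbα hbα hb.le hα.le
    have h8 : t * (b * b) ≤ α * (α * α) :=
      mul_le_mul htαle hbb (by positivity) hα.le
    have h9 : t * (t * (b * b)) ≤ t * (α * (α * α)) :=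
      mul_le_mul_of_nonneg_left h8 ht0.le
    have hkey : (b * (-x) - α ^ 3) * (4 * t) ≤ (-x + s) ^ 2 := by
      nlinarith [sq_nonneg (-x - 2 * t * b), mul_nonneg hs hy0.le, sq_nonneg s, h9]
    have hexp_bound : -b * x - θ ^ 2 / 2 ≤ α ^ 3 := by
      have h5 : b * (-x) - α ^ 3 ≤ (-x + s) ^ 2 / (4 * t) := (le_div_iff₀ h4t).2 hkey
      have h6 : θ ^ 2 / 2 = (-x + s) ^ 2 / (4 * t) := by rw [hθsq]; ring
      rw [h6]; linarith
    -- 2/θ bound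
    have hθ_ge : 1 ≤ b * S * θ := by
      rw [mul_assoc, hSθ]
      have h7 : b * (1/b) < b * (-x) := mul_lt_mul_of_pos_left hy hb
      rw [mul_one_div_cancel hb.ne'] at h7
      nlinarith [mul_nonneg hb.le hs]
    have h2θ : 2 / θ ≤ 2 * (b * S) := by
      rw [div_le_iff₀ hθpos]
      have h10 := mul_le_mul_of_nonneg_left hθ_ge (by norm_num : (0:ℝ) ≤ 2)
      linarith
    have hmul : Real.exp (-b * x) * Real.exp (-θ ^ 2 / 2)
        = Real.exp (-b * x - θ ^ 2 / 2) := by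
      rw [← Real.exp_add]; ring_nf
    have step1 : (Real.sqrt (2 * Real.pi))⁻¹ * b * Real.exp (-b * x) *
        Real.exp (-α * t ^ 2 + α ^ 2 * t) * (∫ z in Set.Ioi θ, Real.exp (-z ^ 2 / 2))
        ≤ (Real.sqrt (2 * Real.pi))⁻¹ * b * Real.exp (-b * x) * Real.exp (α ^ 3) *
          (2 / θ * Real.exp (-θ ^ 2 / 2)) := by
      gcongr
      exact erf_decay hθpos
    have step2 : (Real.sqrt (2 * Real.pi))⁻¹ * b * Real.exp (-b * x) * Real.exp (α ^ 3) *
        (2 / θ * Real.exp (-θ ^ 2 / 2))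
        = (Real.sqrt (2 * Real.pi))⁻¹ * b * (2 / θ) * Real.exp (α ^ 3) *
          Real.exp (-b * x - θ ^ 2 / 2) := by
      rw [← hmul]; ring
    have step3 : (Real.sqrt (2 * Real.pi))⁻¹ * b * (2 / θ) * Real.exp (α ^ 3) *
        Real.exp (-b * x - θ ^ 2 / 2)
        ≤ (Real.sqrt (2 * Real.pi))⁻¹ * b * (2 * (α * Real.sqrt (2 * α))) *
          Real.exp (α ^ 3) * Real.exp (α ^ 3) := by
      have h2θ' : 2 / θ ≤ 2 * (α * Real.sqrt (2 * α)) := by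
        calc 2 / θ ≤ 2 * (b * S) := h2θ
          _ ≤ 2 * (α * Real.sqrt (2 * α)) := by gcongr
      gcongr
    have step4 : (Real.sqrt (2 * Real.pi))⁻¹ * b * (2 * (α * Real.sqrt (2 * α))) *
        Real.exp (α ^ 3) * Real.exp (α ^ 3)
        = (Real.sqrt (2 * Real.pi))⁻¹ * (2 * Real.sqrt (2 * α)) * α *
          (Real.exp (α ^ 3) * Real.exp (α ^ 3)) * b := by ring
    have h4 : extK α * b = Real.exp (α ^ 3 + 1) * b +
        (Real.sqrt (2 * Real.pi))⁻¹ * (2 * Real.sqrt (2 * α)) * α *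
          (Real.exp (α ^ 3) * Real.exp (α ^ 3)) * b := by
      unfold extK; ring
    have h5 : 0 ≤ Real.exp (α ^ 3 + 1) * b := by positivity
    linarith

theorem extinction_uniform (α : ℝ) (hα : 0 < α) :
    Tendsto
      (fun t : ℝ => ⨆ x : ℝ,
        |(Real.sqrt (2 * Real.pi))⁻¹ * (α - t) * Real.exp (-(α - t) * x) *
          Real.exp (-α * t ^ 2 + α ^ 2 * t) *
          ∫ z in Set.Ioi (-(x + t ^ 2 - 2 * α * t) / Real.sqrt (2 * t)),
            Real.exp (-z ^ 2 / 2)|)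
      (nhdsWithin α (Set.Ioo 0 α)) (nhds 0) := by
  apply tendsto_of_tendsto_of_tendsto_of_le_of_le' (g := fun _ : ℝ => (0:ℝ))
    (h := fun t : ℝ => extK α * (α - t))
  · exact tendsto_const_nhds
  · have hc : Tendsto (fun t : ℝ => extK α * (α - t)) (nhds α) (nhds (extK α * (α - α))) :=
      (Continuous.tendsto (by continuity) α)
    rw [sub_self, mul_zero] at hc
    exact hc.mono_left nhdsWithin_le_nhds
  · filter_upwards [self_mem_nhdsWithin] with t ht
    exact Real.iSup_nonneg fun x => abs_nonneg _
  · filter_upwards [self_mem_nhdsWithin] with t ht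
    apply Real.iSup_le (fun x => ext_pointwise α t x hα ht)
    have : 0 < α - t := sub_pos.2 ht.2
    have hK : 0 ≤ extK α := by unfold extK; positivity
    positivity
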